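/- (Dedekind reciprocity) Let h and k be coprime positive integers. Then s(h,k) + s(k,h) = (h² + k² + 1)/(12hk) - 1/4. -/

import Mathlib

/-- The sawtooth function ((x)). -/
def saw (x : ℚ) : ℚ := if x.den = 1 then 0 else x - ⌊x⌋ - 1/2

/-- The Dedekind sum s(h,k) = Σ_{m=1}^{k} ((hm/k))((m/k)). -/
noncomputable def dedekindSum (h k : ℤ) : ℚ :=
  ∑ m ∈ Finset.Icc (1 : ℤ) k, saw (h * m / k) * saw (m / k)

open Finset

lemma sum_Icc_id_nat (m : ℕ) : 2 * ∑ r ∈ Icc (1:ℤ) (m:ℤ), r = m * (m+1) := by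
  induction m with
  | zero => simp
  | succ m ih =>
    push_cast
    rw [show Icc (1:ℤ) ((m:ℤ)+1) = insert ((m:ℤ)+1) (Icc 1 (m:ℤ)) by ext x; simp; omega,
      Finset.sum_insert (by simp)]
    push_cast at ih
    ring_nf
    ring_nf at ih
    omega

lemma sum_Icc_id (n : ℤ) (hn : 0 ≤ n) : 2 * ∑ r ∈ Icc (1:ℤ) n, r = n * (n+1) := by
  obtain ⟨m, rfl⟩ : ∃ m:ℕ, n = (m:ℤ) := ⟨n.toNat, by omega⟩
  exact_mod_cast sum_Icc_id_nat m

lemma sum_Icc_sq_nat (m : ℕ) : 6 * ∑ r ∈ Icc (1:ℤ) (m:ℤ), r^2 = m * (m+1) * (2*m+1) := by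
  induction m with
  | zero => simp
  | succ m ih =>
    push_cast
    rw [show Icc (1:ℤ) ((m:ℤ)+1) = insert ((m:ℤ)+1) (Icc 1 (m:ℤ)) by ext x; simp; omega,
      Finset.sum_insert (by simp)]
    push_cast at ih
    ring_nf
    ring_nf at ih
    nlinarith [ih]

lemma sum_Icc_sq (n : ℤ) (hn : 0 ≤ n) : 6 * ∑ r ∈ Icc (1:ℤ) n, r^2 = n * (n+1) * (2*n+1) := by
  obtain ⟨m, rfl⟩ : ∃ m:ℕ, n = (m:ℤ) := ⟨n.toNat, by omega⟩
  exact_mod_cast sum_Icc_sq_nat m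

lemma floor_int_div (a b : ℤ) (hb : 0 < b) : ⌊(a:ℚ)/(b:ℚ)⌋ = a / b := by
  have h1 : ((b.toNat : ℕ) : ℚ) = (b : ℚ) := by
    rw [← Int.cast_natCast]; norm_cast; omega
  have h2 : ((b.toNat : ℕ) : ℤ) = b := by omega
  rw [← h1, Rat.floor_intCast_div_natCast, h2]

lemma saw_int_div (a b : ℤ) (hb : 0 < b) (hnd : ¬ b ∣ a) :
    saw ((a:ℚ)/(b:ℚ)) = (a:ℚ)/b - ((a / b : ℤ) : ℚ) - 1/2 := by
  rw [saw, if_neg, floor_int_div a b hb]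
  rw [Rat.den_div_intCast_eq_one_iff a b (by omega)]
  exact hnd

lemma not_dvd_of_coprime {h k m : ℤ} (hco : Int.gcd h k = 1) (h1 : 1 ≤ m) (h2 : m ≤ k-1) :
    ¬ k ∣ h * m := by
  intro hd
  have hc : IsCoprime k h := by
    rw [Int.isCoprime_iff_gcd_eq_one, Int.gcd_comm]; exact hco
  have : k ∣ m := hc.dvd_of_dvd_mul_left hd
  have := Int.le_of_dvd (by omega) this
  omega

noncomputable def dA (h k : ℤ) : ℤ := ∑ m ∈ Icc (1:ℤ) (k-1), m * ((h*m)/k)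
noncomputable def dD (h k : ℤ) : ℤ := ∑ m ∈ Icc (1:ℤ) (k-1), (h*m)/k
noncomputable def dE (h k : ℤ) : ℤ := ∑ m ∈ Icc (1:ℤ) (k-1), ((h*m)/k)^2

lemma dedekind_expand (h k : ℤ) (hco : Int.gcd h k = 1) (hh : 0 < h) (hk : 0 < k) :
    (12*(k:ℚ)^2) * dedekindSum h k
      = ((12*h*(∑ m ∈ Icc (1:ℤ) (k-1), m^2) - 12*k*dA h k
          - 6*k*(1+h)*(∑ m ∈ Icc (1:ℤ) (k-1), m) + 6*k^2*dD h k + 3*k^2*(k-1) : ℤ) : ℚ) := by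
  have hk0 : (k:ℚ) ≠ 0 := by exact_mod_cast hk.ne'
  have hsplit : Icc (1:ℤ) k = insert k (Icc 1 (k-1)) := by ext x; simp; omega
  have htop : saw ((k:ℚ)/(k:ℚ)) = 0 := by
    rw [div_self hk0]
    simp [saw]
  have step : ∀ m ∈ Icc (1:ℤ) (k-1),
      12*(k:ℚ)^2 * (saw ((h:ℚ) * (m:ℚ) / (k:ℚ)) * saw ((m:ℚ) / (k:ℚ)))
      = ((12*h*m^2 - 12*k*(m*((h*m)/k)) - 6*k*(1+h)*m + 6*k^2*((h*m)/k) + 3*k^2 : ℤ) : ℚ) := by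
    intro m hm
    simp only [mem_Icc] at hm
    obtain ⟨hm1, hm2⟩ := hm
    have hkm : ¬ k ∣ m := fun hd => absurd (Int.le_of_dvd (by omega) hd) (by omega)
    have hkhm : ¬ k ∣ h*m := not_dvd_of_coprime hco hm1 hm2
    have e1 : (h:ℚ) * m / k = ((h*m : ℤ):ℚ) / (k:ℚ) := by push_cast; ring
    have e2 : m / k = 0 := Int.ediv_eq_zero_of_lt (by omega) (by omega)
    rw [e1, saw_int_div (h*m) k hk hkhm, saw_int_div m k hk hkm, e2]
    push_cast
    field_simp
    ring
  have hcard : (((Icc (1:ℤ) (k-1)).card : ℕ) : ℤ) = k - 1 := by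
    rw [Int.card_Icc]; omega
  calc (12*(k:ℚ)^2) * dedekindSum h k
      = ∑ m ∈ Icc (1:ℤ) (k-1),
          12*(k:ℚ)^2 * (saw ((h:ℚ) * (m:ℚ) / (k:ℚ)) * saw ((m:ℚ) / (k:ℚ))) := by
        rw [dedekindSum, hsplit, Finset.sum_insert (by simp)]
        push_cast
        rw [htop, mul_zero, zero_add, Finset.mul_sum]
    _ = ∑ m ∈ Icc (1:ℤ) (k-1),
          ((12*h*m^2 - 12*k*(m*((h*m)/k)) - 6*k*(1+h)*m + 6*k^2*((h*m)/k) + 3*k^2 : ℤ) : ℚ) :=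
        Finset.sum_congr rfl step
    _ = ((∑ m ∈ Icc (1:ℤ) (k-1),
          (12*h*m^2 - 12*k*(m*((h*m)/k)) - 6*k*(1+h)*m + 6*k^2*((h*m)/k) + 3*k^2) : ℤ) : ℚ) := by
        rw [Int.cast_sum]
    _ = _ := by
        congr 1
        rw [dA, dD]
        rw [Finset.sum_add_distrib, Finset.sum_add_distrib, Finset.sum_sub_distrib,
          Finset.sum_sub_distrib, ← Finset.mul_sum, ← Finset.mul_sum, ← Finset.mul_sum,
          ← Finset.mul_sum, Finset.sum_const, nsmul_eq_mul, hcard]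
        ring

lemma not_dvd_of_coprime' {h k m : ℤ} (hc : IsCoprime h k) (h1 : 1 ≤ m) (h2 : m ≤ k-1) :
    ¬ k ∣ h * m := by
  intro hd
  have : k ∣ m := (hc.symm).dvd_of_dvd_mul_left hd
  have := Int.le_of_dvd (by omega) this
  omega

lemma ediv_reflect {h k m : ℤ} (hk : 0 < k) (hnd : ¬ k ∣ h * m) :
    (h*m)/k + (h*(k-m))/k = h - 1 := by
  have h1 : 0 ≤ (h*m) % k := Int.emod_nonneg _ (by omega)
  have h2 : (h*m) % k < k := Int.emod_lt_of_pos _ hk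
  have h3 : (h*m) % k ≠ 0 := fun he => hnd (Int.dvd_of_emod_eq_zero he)
  have h4 : k * ((h*m)/k) + (h*m)%k = h*m := Int.mul_ediv_add_emod _ _
  have h5 : h*(k-m) = (k - (h*m)%k) + (h - (h*m)/k - 1)*k := by linear_combination h4
  have h6 : (k - (h*m)%k)/k = 0 := Int.ediv_eq_zero_of_lt (by omega) (by omega)
  rw [h5, Int.add_mul_ediv_right _ _ (by omega : k ≠ 0), h6]
  omega

lemma dD_eq (h k : ℤ) (hco : Int.gcd h k = 1) (hh : 0 < h) (hk : 0 < k) :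
    2 * dD h k = (h-1)*(k-1) := by
  have hcard : (((Icc (1:ℤ) (k-1)).card : ℕ) : ℤ) = k - 1 := by
    rw [Int.card_Icc]; omega
  have hrefl : dD h k = ∑ m ∈ Icc (1:ℤ) (k-1), (h*(k-m))/k := by
    rw [dD]
    apply Finset.sum_nbij' (fun m => k - m) (fun m => k - m)
    · intro a ha; simp only [mem_Icc] at *; omega
    · intro a ha; simp only [mem_Icc] at *; omega
    · intro a _; ring
    · intro a _; ring
    · intro a _
      have e : k - (k - a) = a := by ring
      rw [e]
  calc 2 * dD h k = ∑ m ∈ Icc (1:ℤ) (k-1), ((h*m)/k + (h*(k-m))/k) := by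
        rw [two_mul]
        nth_rewrite 2 [hrefl]
        rw [dD, ← Finset.sum_add_distrib]
    _ = ∑ _m ∈ Icc (1:ℤ) (k-1), (h-1) := by
        apply Finset.sum_congr rfl
        intro m hm
        simp only [mem_Icc] at hm
        exact ediv_reflect hk (not_dvd_of_coprime hco hm.1 hm.2)
    _ = (h-1)*(k-1) := by
        rw [Finset.sum_const, nsmul_eq_mul, hcard]; ring

lemma perm_sq (h k : ℤ) (hco : Int.gcd h k = 1) (hh : 0 < h) (hk : 0 < k) :
    ∑ m ∈ Icc (1:ℤ) (k-1), ((h*m)%k)^2 = ∑ m ∈ Icc (1:ℤ) (k-1), m^2 := by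
  have hc : IsCoprime h k := Int.isCoprime_iff_gcd_eq_one.mpr hco
  obtain ⟨u, v, huv⟩ := id hc
  have hcu : IsCoprime u k := ⟨h, v, by linear_combination huv⟩
  have memi : ∀ (a : ℤ), 1 ≤ a → a ≤ k-1 → ∀ (w : ℤ), IsCoprime w k →
      1 ≤ (w*a)%k ∧ (w*a)%k ≤ k-1 := by
    intro a h1 h2 w hw
    have e0 : ¬ k ∣ w*a := not_dvd_of_coprime' hw h1 h2
    have e1 : 0 ≤ (w*a) % k := Int.emod_nonneg _ (by omega)
    have e2 : (w*a) % k < k := Int.emod_lt_of_pos _ hk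
    have e3 : (w*a) % k ≠ 0 := fun he => e0 (Int.dvd_of_emod_eq_zero he)
    omega
  apply Finset.sum_nbij' (fun m => (h*m)%k) (fun m => (u*m)%k)
  · intro a ha; simp only [mem_Icc] at *
    exact memi a ha.1 ha.2 h hc
  · intro a ha; simp only [mem_Icc] at *
    exact memi a ha.1 ha.2 u hcu
  · intro a ha; simp only [mem_Icc] at ha
    calc (u * (h*a % k)) % k = (u * (h*a)) % k := by
          rw [Int.mul_emod, Int.emod_emod_of_dvd _ dvd_rfl, ← Int.mul_emod]
      _ = a % k := by
          conv_lhs => rw [show u*(h*a) = a + k*(v*a*(-1) + 0) by linear_combination a*huv]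
          rw [Int.add_mul_emod_self_left]
      _ = a := Int.emod_eq_of_lt (by omega) (by omega)
  · intro a ha; simp only [mem_Icc] at ha
    calc (h * (u*a % k)) % k = (h * (u*a)) % k := by
          rw [Int.mul_emod, Int.emod_emod_of_dvd _ dvd_rfl, ← Int.mul_emod]
      _ = a % k := by
          conv_lhs => rw [show h*(u*a) = a + k*(v*a*(-1) + 0) by linear_combination a*huv]
          rw [Int.add_mul_emod_self_left]
      _ = a := Int.emod_eq_of_lt (by omega) (by omega)
  · intro a _; rfl

lemma i2_lemma (h k : ℤ) (hco : Int.gcd h k = 1) (hh : 0 < h) (hk : 0 < k) :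
    2*h*k*(dA h k) = (h^2-1)*(∑ m ∈ Icc (1:ℤ) (k-1), m^2) + k^2*(dE h k) := by
  have P := perm_sq h k hco hh hk
  have expand : ∀ m ∈ Icc (1:ℤ) (k-1),
      ((h*m)%k)^2 = h^2*m^2 - 2*h*k*(m*((h*m)/k)) + k^2*((h*m)/k)^2 := by
    intro m _
    rw [Int.emod_def]
    ring
  rw [Finset.sum_congr rfl expand] at P
  rw [Finset.sum_add_distrib, Finset.sum_sub_distrib, ← Finset.mul_sum, ← Finset.mul_sum,
    ← Finset.mul_sum] at P
  rw [dA, dE]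
  linear_combination -P

lemma i3_lemma (h k : ℤ) (hco : Int.gcd h k = 1) (hh : 0 < h) (hk : 0 < k) :
    2*(dE h k) = 2*h*(h-1)*(k-1) - 4*(dA k h) - (h-1)*(k-1) := by
  have hco' : Int.gcd k h = 1 := by rw [Int.gcd_comm]; exact hco
  -- Step A: each square as a sum of odd numbers, extended with an indicator
  have stepA : ∀ m ∈ Icc (1:ℤ) (k-1),
      ((h*m)/k)^2 = ∑ s ∈ Icc (1:ℤ) (h-1), (if s ≤ (h*m)/k then 2*s-1 else 0) := by
    intro m hm
    simp only [mem_Icc] at hm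
    have hd0 : 0 ≤ (h*m)/k := Int.ediv_nonneg (mul_nonneg (by omega) (by omega)) (le_of_lt hk)
    have hd1 : (h*m)/k ≤ h-1 := by
      have : (h*m)/k < h := by
        rw [Int.ediv_lt_iff_lt_mul hk]
        nlinarith [hm.1, hm.2]
      omega
    have hsq : ∑ s ∈ Icc (1:ℤ) ((h*m)/k), (2*s-1) = ((h*m)/k)^2 := by
      have hid := sum_Icc_id ((h*m)/k) hd0
      have hcard : (((Icc (1:ℤ) ((h*m)/k)).card : ℕ) : ℤ) = (h*m)/k := by
        rw [Int.card_Icc]; omega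
      rw [Finset.sum_sub_distrib, ← Finset.mul_sum, Finset.sum_const, nsmul_eq_mul, hcard]
      nlinarith [hid]
    have hfil : Icc (1:ℤ) ((h*m)/k) = (Icc (1:ℤ) (h-1)).filter (fun s => s ≤ (h*m)/k) := by
      ext x
      simp only [mem_Icc, mem_filter]
      constructor
      · intro hx; exact ⟨⟨hx.1, le_trans hx.2 hd1⟩, hx.2⟩
      · intro hx; exact ⟨hx.1.1, hx.2⟩
    rw [← hsq, hfil, Finset.sum_filter]
  -- Step C: inner sums
  have stepC : ∀ s ∈ Icc (1:ℤ) (h-1),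
      ∑ m ∈ Icc (1:ℤ) (k-1), (if s ≤ (h*m)/k then 2*s-1 else 0)
        = (2*s-1) * (k-1-(k*s)/h) := by
    intro s hs
    simp only [mem_Icc] at hs
    have ht0 : 0 ≤ (k*s)/h := Int.ediv_nonneg (mul_nonneg (by omega) (by omega)) (le_of_lt hh)
    have ht1 : (k*s)/h ≤ k-1 := by
      have : (k*s)/h < k := by
        rw [Int.ediv_lt_iff_lt_mul hh]
        nlinarith [hs.1, hs.2]
      omega
    have hfil : (Icc (1:ℤ) (k-1)).filter (fun m => s ≤ (h*m)/k) = Icc ((k*s)/h + 1) (k-1) := by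
      ext m
      simp only [mem_filter, mem_Icc]
      constructor
      · rintro ⟨⟨hm1, hm2⟩, hle⟩
        have h1 : s*k ≤ h*m := (Int.le_ediv_iff_mul_le hk).1 hle
        have hne : s*k ≠ h*m := by
          intro he
          exact (not_dvd_of_coprime hco hm1 hm2) ⟨s, by linarith⟩
        have hlt : (k*s)/h < m := by
          rw [Int.ediv_lt_iff_lt_mul hh]
          have := lt_of_le_of_ne h1 hne
          linarith
        exact ⟨by linarith [Int.add_one_le_iff.2 hlt], hm2⟩
      · rintro ⟨hm1, hm2⟩
        have hlt : (k*s)/h < m := by linarith [Int.add_one_le_iff (a := (k*s)/h) (b := m)]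
        have h2 : k*s < m*h := (Int.ediv_lt_iff_lt_mul hh).1 hlt
        refine ⟨⟨by linarith, hm2⟩, ?_⟩
        rw [Int.le_ediv_iff_mul_le hk]
        linarith
    have hcard : (((Icc ((k*s)/h + 1) (k-1)).card : ℕ) : ℤ) = k - 1 - (k*s)/h := by
      rw [Int.card_Icc_of_le (a := (k*s)/h + 1) (b := k-1) (by linarith)]
      ring
    rw [← Finset.sum_filter, hfil, Finset.sum_const, nsmul_eq_mul, hcard]
    ring
  -- assemble
  have main : dE h k = ∑ s ∈ Icc (1:ℤ) (h-1), (2*s-1) * (k-1-(k*s)/h) := by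
    rw [dE, Finset.sum_congr rfl stepA, Finset.sum_comm, Finset.sum_congr rfl stepC]
  have expand : ∀ s ∈ Icc (1:ℤ) (h-1),
      (2*s-1) * (k-1-(k*s)/h) = 2*(k-1)*s - 2*(s*((k*s)/h)) + (k*s)/h - (k-1) := by
    intro s _; ring
  rw [Finset.sum_congr rfl expand] at main
  rw [Finset.sum_sub_distrib, Finset.sum_add_distrib, Finset.sum_sub_distrib,
    ← Finset.mul_sum, ← Finset.mul_sum, Finset.sum_const, nsmul_eq_mul] at main
  have hcard : (((Icc (1:ℤ) (h-1)).card : ℕ) : ℤ) = h - 1 := by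
    rw [Int.card_Icc]; omega
  rw [hcard] at main
  have hS1 := sum_Icc_id (h-1) (by omega)
  have hD := dD_eq k h hco' hk hh
  rw [dD] at hD
  rw [dA]
  linear_combination 2*main + 2*(k-1)*hS1 + hD

theorem dedekindSum_reciprocity (h k : ℤ) (hco : Int.gcd h k = 1) (hh : 0 < h) (hk : 0 < k) :
    dedekindSum h k + dedekindSum k h
      = ((h : ℚ)^2 + (k : ℚ)^2 + 1) / (12 * h * k) - 1/4 := by
  have hco' : Int.gcd k h = 1 := by rw [Int.gcd_comm]; exact hco
  have E1 := dedekind_expand h k hco hh hk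
  have E2 := dedekind_expand k h hco' hk hh
  have q1 := congrArg (fun z : ℤ => (z : ℚ)) (sum_Icc_id (k-1) (by omega))
  have q2 := congrArg (fun z : ℤ => (z : ℚ)) (sum_Icc_sq (k-1) (by omega))
  have q3 := congrArg (fun z : ℤ => (z : ℚ)) (sum_Icc_id (h-1) (by omega))
  have q4 := congrArg (fun z : ℤ => (z : ℚ)) (sum_Icc_sq (h-1) (by omega))
  have i1 := congrArg (fun z : ℤ => (z : ℚ)) (dD_eq h k hco hh hk)
  have i1' := congrArg (fun z : ℤ => (z : ℚ)) (dD_eq k h hco' hk hh)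
  have i2 := congrArg (fun z : ℤ => (z : ℚ)) (i2_lemma h k hco hh hk)
  have i3 := congrArg (fun z : ℤ => (z : ℚ)) (i3_lemma h k hco hh hk)
  push_cast at E1 E2 q1 q2 q3 q4 i1 i1' i2 i3
  have key : (144*(h:ℚ)^2*(k:ℚ)^2) * (dedekindSum h k + dedekindSum k h)
      = 12*(h:ℚ)*(k:ℚ)*((h:ℚ)^2+(k:ℚ)^2+1) - 36*(h:ℚ)^2*(k:ℚ)^2 := by
    linear_combination (12*(h:ℚ)^2) * E1 + 12*(k:ℚ)^2 * E2 - 72*(h:ℚ)*i2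
      - 36*(h:ℚ)*(k:ℚ)^2*i3 + 12*(h:ℚ)*((h:ℚ)^2+1)*q2 + 24*(k:ℚ)^3*q4
      - 36*(h:ℚ)^2*(k:ℚ)*(1+(h:ℚ))*q1 - 36*(h:ℚ)*(k:ℚ)^2*(1+(k:ℚ))*q3
      + 36*(h:ℚ)^2*(k:ℚ)^2*i1 + 36*(h:ℚ)^2*(k:ℚ)^2*i1'
  have h0 : (h:ℚ) ≠ 0 := by exact_mod_cast hh.ne'
  have k0 : (k:ℚ) ≠ 0 := by exact_mod_cast hk.ne'
  have hne : (144*(h:ℚ)^2*(k:ℚ)^2) ≠ 0 :=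
    mul_ne_zero (mul_ne_zero (by norm_num) (pow_ne_zero 2 h0)) (pow_ne_zero 2 k0)
  have goal2 : dedekindSum h k + dedekindSum k h
      = (12*(h:ℚ)*(k:ℚ)*((h:ℚ)^2+(k:ℚ)^2+1) - 36*(h:ℚ)^2*(k:ℚ)^2)/(144*(h:ℚ)^2*(k:ℚ)^2) := by
    rw [eq_div_iff hne]
    linear_combination key
  rw [goal2]
  field_simp
  ring
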